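/- Let {S_μ}_{μ∈Δ} be a root system extended by an abelian group G, for a locally finite irreducible root system Δ, and suppose μ, ν ∈ Δ have the same length. Then S_μ = S_ν. Moreover, if μ is a short root, then S_ν ⊆ S_μ for all ν ∈ Δ. -/

import Mathlib

set_option linter.unusedSectionVars false
set_option linter.unusedVariables false

namespace St12Aux

variable {V : Type*} [AddCommGroup V] [Module ℚ V]
variable (B : V →ₗ[ℚ] V →ₗ[ℚ] ℚ) (Δ : Set V)

/-- Chains of pairwise non-orthogonal roots. -/
inductive Chn : ℕ → V → V → Prop
  | refl (x : V) (hx : x ∈ Δ) : Chn 0 x x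
  | snoc {n : ℕ} {x y : V} (z : V) (h : Chn n x y) (hz : z ∈ Δ) (he : B y z ≠ 0) :
      Chn (n + 1) x z

variable {B Δ}

lemma chn_mem {n : ℕ} {x y : V} (h : Chn B Δ n x y) : x ∈ Δ ∧ y ∈ Δ := by
  induction h with
  | refl x hx => exact ⟨hx, hx⟩
  | snoc z h hz he ih => exact ⟨ih.1, hz⟩

section

variable {G : Type*} [AddCommGroup G] {S : V → Set G}
variable (hBsymm : ∀ u v : V, B u v = B v u)
  (hpos : ∀ μ ∈ Δ, 0 < B μ μ)
  (hcart : ∀ μ ∈ Δ, ∀ ν ∈ Δ, ∃ k : ℤ, (k : ℚ) = 2 * B ν μ / B μ μ)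
  (hrefl : ∀ μ ∈ Δ, ∀ ν ∈ Δ, ν - (2 * B ν μ / B μ μ) • μ ∈ Δ)
  (hlocfin : ∀ S' : Finset V, (Δ ∩ (Submodule.span ℚ (S' : Set V) : Set V)).Finite)
  (hirr : ∀ Δ₁ Δ₂ : Set V, Δ = Δ₁ ∪ Δ₂ →
      (∀ a ∈ Δ₁, ∀ b ∈ Δ₂, B a b = 0) → Δ₁ = ∅ ∨ Δ₂ = ∅)
  (hS1 : ∀ μ ∈ Δ, ∀ ν ∈ Δ, ∀ k : ℤ, (k : ℚ) = 2 * B ν μ / B μ μ →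
      ∀ s ∈ S ν, ∀ s' ∈ S μ, s - k • s' ∈ S (ν - (k : ℚ) • μ))
  (hS2 : ∀ μ ∈ Δ, (1 / 2 : ℚ) • μ ∉ Δ → (0 : G) ∈ S μ)

include hBsymm hpos in
lemma normR {μ ν : V} {k : ℤ} (hμ : μ ∈ Δ)
    (hk : (k : ℚ) = 2 * B ν μ / B μ μ) :
    B (ν - (k : ℚ) • μ) (ν - (k : ℚ) • μ) = B ν ν := by
  have hA := (hpos μ hμ).ne'
  have h1 : B ν μ = (k : ℚ) * B μ μ / 2 := by field_simp at hk ⊢; linarith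
  have h2 : B μ ν = (k : ℚ) * B μ μ / 2 := (hBsymm μ ν).trans h1
  simp only [map_sub, map_smul, LinearMap.sub_apply, LinearMap.smul_apply, smul_eq_mul]
  rw [h1, h2]; ring

include hpos hcart hS1 hS2 in
lemma lemZ {μ ν : V} {k : ℤ} (hμ : μ ∈ Δ) (hν : ν ∈ Δ)
    (hk : (k : ℚ) = 2 * B ν μ / B μ μ) {s : G} (hs : s ∈ S ν) :
    s ∈ S (ν - (k : ℚ) • μ) := by
  by_cases hhalf : (1 / 2 : ℚ) • μ ∈ Δ
  · set β := (1 / 2 : ℚ) • μ with hβdef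
    have hBμμ := (hpos μ hμ).ne'
    have hββ : B β β = B μ μ / 4 := by
      simp [hβdef, map_smul, smul_eq_mul]; ring
    have hνβ : B ν β = B ν μ / 2 := by
      simp [hβdef, map_smul, smul_eq_mul]; ring
    have hquarter : (1 / 2 : ℚ) • β ∉ Δ := by
      intro hq
      obtain ⟨j, hj⟩ := hcart μ hμ _ hq
      have hbq : B ((1 / 2 : ℚ) • β) μ = B μ μ / 4 := by
        simp [hβdef, smul_smul, map_smul, LinearMap.smul_apply, smul_eq_mul]; ring
      rw [hbq] at hj
      have hj2 : (j : ℚ) = 1 / 2 := by rw [hj]; field_simp; ring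
      have : ((2 * j : ℤ) : ℚ) = 1 := by push_cast; linarith
      have : (2 * j : ℤ) = 1 := by exact_mod_cast this
      omega
    have hk' : ((2 * k : ℤ) : ℚ) = 2 * B ν β / B β β := by
      rw [hνβ, hββ]; push_cast; rw [hk]; field_simp; ring
    have h0 : (0 : G) ∈ S β := hS2 β hhalf hquarter
    have := hS1 β hhalf ν hν (2 * k) hk' s hs 0 h0
    simp only [smul_zero, sub_zero] at this
    have hveq : ((2 * k : ℤ) : ℚ) • β = (k : ℚ) • μ := by
      rw [hβdef, smul_smul]; congr 1; push_cast; ring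
    rwa [hveq] at this
  · have h0 : (0 : G) ∈ S μ := hS2 μ hμ hhalf
    have := hS1 μ hμ ν hν k hk s hs 0 h0
    simpa using this

include hpos hcart hrefl hS1 hS2 in
lemma lemR {μ ν : V} {k : ℤ} (hμ : μ ∈ Δ) (hν : ν ∈ Δ)
    (hk : (k : ℚ) = 2 * B ν μ / B μ μ) :
    S (ν - (k : ℚ) • μ) = S ν := by
  have hBμμ := (hpos μ hμ).ne'
  have hγ : ν - (k : ℚ) • μ ∈ Δ := by
    have h := hrefl μ hμ ν hν; rwa [← hk] at h
  have hbγ : B (ν - (k : ℚ) • μ) μ = - B ν μ := by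
    have h1 : B ν μ = (k : ℚ) * B μ μ / 2 := by
      field_simp at hk ⊢; linarith
    simp only [map_sub, map_smul, LinearMap.sub_apply, LinearMap.smul_apply, smul_eq_mul]
    rw [h1]; ring
  have hk2 : ((-k : ℤ) : ℚ) = 2 * B (ν - (k : ℚ) • μ) μ / B μ μ := by
    rw [hbγ]; push_cast; rw [hk]; ring
  apply Set.Subset.antisymm
  · intro s hs
    have := lemZ hpos hcart hS1 hS2 hμ hγ hk2 hs
    have hveq : ν - (k : ℚ) • μ - ((-k : ℤ) : ℚ) • μ = ν := by
      push_cast; rw [neg_smul, sub_neg_eq_add, sub_add_cancel]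
    rwa [hveq] at this
  · intro s hs
    exact lemZ hpos hcart hS1 hS2 hμ hν hk hs

include hpos hrefl hlocfin in
lemma lemF {α ν : V} {p q : ℤ} (hα : α ∈ Δ) (hν : ν ∈ Δ)
    (hp : (p : ℚ) = 2 * B ν α / B α α) (hq : (q : ℚ) = 2 * B α ν / B ν ν)
    (hpq : 4 ≤ p * q) (hindep : ∀ c : ℚ, ν ≠ c • α) : False := by
  classical
  have hA := (hpos α hα).ne'
  have hN := (hpos ν hν).ne'
  have hBνα : B ν α = (p : ℚ) * B α α / 2 := by field_simp at hp ⊢; linarith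
  have hBαν : B α ν = (q : ℚ) * B ν ν / 2 := by field_simp at hq ⊢; linarith
  set m : ℚ := (p : ℚ) * (q : ℚ) with hm
  have hm4 : (4 : ℚ) ≤ m := by rw [hm]; exact_mod_cast hpq
  set ab : ℕ → ℚ × ℚ := fun n => Nat.rec ((0 : ℚ), (1 : ℚ))
    (fun _ ih => (-ih.1 - ih.2 * p, ih.1 * q + ih.2 * (m - 1))) n with habdef
  have hab01 : (ab 0).1 = 0 := rfl
  have hab02 : (ab 0).2 = 1 := rfl
  have habs1 : ∀ n, (ab (n + 1)).1 = -(ab n).1 - (ab n).2 * p := fun n => rfl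
  have habs2 : ∀ n, (ab (n + 1)).2 = (ab n).1 * q + (ab n).2 * (m - 1) := fun n => rfl
  set w : ℕ → V := fun n => (ab n).1 • α + (ab n).2 • ν with hwdef
  have hwΔ : ∀ n, w n ∈ Δ := by
    intro n
    induction n with
    | zero =>
      have : w 0 = ν := by
        show (ab 0).1 • α + (ab 0).2 • ν = ν
        rw [hab01, hab02]; simp
      rwa [this]
    | succ n ih =>
      set a := (ab n).1
      set b := (ab n).2
      have hBwα : B (w n) α = a * B α α + b * (p * B α α / 2) := by
        simp only [hwdef, map_add, map_smul, LinearMap.add_apply, LinearMap.smul_apply,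
          smul_eq_mul, hBνα]; rfl
      have hc1 : 2 * B (w n) α / B α α = 2 * a + b * p := by
        rw [hBwα]; field_simp
      have hy : w n - (2 * B (w n) α / B α α) • α ∈ Δ := hrefl α hα (w n) ih
      rw [hc1] at hy
      have hyeq : w n - (2 * a + b * p) • α = (-a - b * p) • α + b • ν := by
        rw [hwdef]; module
      rw [hyeq] at hy
      set y := (-a - b * p) • α + b • ν with hydef
      have hByν : B y ν = (-a - b * p) * (q * B ν ν / 2) + b * B ν ν := by
        simp only [hydef, map_add, map_smul, LinearMap.add_apply, LinearMap.smul_apply,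
          smul_eq_mul, hBαν]
      have hc2 : 2 * B y ν / B ν ν = (-a - b * p) * q + 2 * b := by
        rw [hByν]; field_simp
      have hz : y - (2 * B y ν / B ν ν) • ν ∈ Δ := hrefl ν hν y hy
      rw [hc2] at hz
      have hzeq : y - ((-a - b * p) * q + 2 * b) • ν = w (n + 1) := by
        have h1 : w (n + 1) = (ab (n + 1)).1 • α + (ab (n + 1)).2 • ν := rfl
        rw [h1, habs1 n, habs2 n, hydef, hm]
        match_scalars <;> ring
      rwa [hzeq] at hz
  have hb2 : ∀ n, (ab (n + 2)).2 = (m - 2) * (ab (n + 1)).2 - (ab n).2 := by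
    intro n
    rw [habs2 (n + 1), habs1 n, habs2 n]
    ring
  have hmono : ∀ n, 1 ≤ (ab n).2 ∧ (ab n).2 < (ab (n + 1)).2 := by
    intro n
    induction n with
    | zero =>
      constructor
      · rw [hab02]
      · rw [habs2 0, hab01, hab02]; linarith
    | succ n ih =>
      obtain ⟨h1, h2⟩ := ih
      have h3 := hb2 n
      constructor
      · linarith
      · rw [h3]; nlinarith
  have hbstrict : StrictMono (fun n => (ab n).2) :=
    strictMono_nat_of_lt_succ (fun n => (hmono n).2)
  have hwinj : Function.Injective w := by
    intro i j hij
    by_contra hne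
    have hbne : (ab i).2 - (ab j).2 ≠ 0 :=
      sub_ne_zero.2 (fun h => hne (hbstrict.injective h))
    have hv : ((ab i).2 - (ab j).2) • ν = ((ab j).1 - (ab i).1) • α := by
      calc ((ab i).2 - (ab j).2) • ν
          = ((ab i).1 • α + (ab i).2 • ν) - ((ab j).1 • α + (ab j).2 • ν)
            + ((ab j).1 - (ab i).1) • α := by module
        _ = ((ab j).1 - (ab i).1) • α := by
            rw [show (ab i).1 • α + (ab i).2 • ν = w i from rfl,
              show (ab j).1 • α + (ab j).2 • ν = w j from rfl, hij]
            simp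
    have hν' : ν = (((ab i).2 - (ab j).2)⁻¹ * ((ab j).1 - (ab i).1)) • α := by
      have := congrArg (fun v => ((ab i).2 - (ab j).2)⁻¹ • v) hv
      simpa [smul_smul, inv_mul_cancel₀ hbne] using this
    exact hindep _ hν'
  have hfin := hlocfin {α, ν}
  have hmem : ∀ n, w n ∈ Δ ∩ (Submodule.span ℚ (({α, ν} : Finset V) : Set V) : Set V) := by
    intro n
    refine ⟨hwΔ n, ?_⟩
    have hαs : α ∈ (({α, ν} : Finset V) : Set V) := by simp
    have hνs : ν ∈ (({α, ν} : Finset V) : Set V) := by simp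
    exact Submodule.add_mem _
      (Submodule.smul_mem _ _ (Submodule.subset_span hαs))
      (Submodule.smul_mem _ _ (Submodule.subset_span hνs))
  exact (Set.infinite_of_injective_forall_mem hwinj hmem) hfin

include hBsymm hpos hcart hrefl hS1 hS2 in
lemma lemC1 {μ ν : V} (hμ : μ ∈ Δ) (hν : ν ∈ Δ) (ha : B μ μ = B ν ν)
    (hk : ((1 : ℤ) : ℚ) = 2 * B ν μ / B μ μ) : S μ = S ν := by
  have hA := (hpos μ hμ).ne'
  have hνμ : B ν μ = B μ μ / 2 := by field_simp at hk ⊢; push_cast at hk; linarith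
  have hμν : B μ ν = B μ μ / 2 := (hBsymm μ ν).trans hνμ
  have hγΔ : ν - ((1 : ℤ) : ℚ) • μ ∈ Δ := by
    have h := hrefl μ hμ ν hν; rwa [← hk] at h
  set γ := ν - ((1 : ℤ) : ℚ) • μ with hγdef
  have hνγ : B ν γ = B μ μ / 2 := by
    simp only [hγdef, map_sub, map_smul, LinearMap.sub_apply, LinearMap.smul_apply,
      smul_eq_mul, hνμ]
    push_cast; rw [← ha]; ring
  have hγγ : B γ γ = B μ μ := by
    simp only [hγdef, map_sub, map_smul, LinearMap.sub_apply, LinearMap.smul_apply,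
      smul_eq_mul, hνμ, hμν]
    push_cast; rw [← ha]; ring
  have hk1 : ((1 : ℤ) : ℚ) = 2 * B ν γ / B γ γ := by
    rw [hνγ, hγγ]; field_simp; norm_num
  have h := lemR hpos hcart hrefl hS1 hS2 hγΔ hν hk1
  have hveq : ν - ((1 : ℤ) : ℚ) • γ = μ := by rw [hγdef]; push_cast; module
  rwa [hveq] at h

include hBsymm hpos hcart hrefl hlocfin hS1 hS2 in
lemma lemC {μ ν : V} (hμ : μ ∈ Δ) (hν : ν ∈ Δ) (ha : B μ μ = B ν ν)
    (hne : B ν μ ≠ 0) : S μ = S ν := by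
  have hA := (hpos μ hμ).ne'
  obtain ⟨k, hk⟩ := hcart μ hμ ν hν
  have hk0 : k ≠ 0 := by
    intro h; rw [h] at hk; push_cast at hk
    field_simp at hk; exact hne (by linarith)
  have hk14 : k = 1 ∨ k = -1 ∨ 4 ≤ k * k := by
    have h : 2 ≤ k ∨ k ≤ -2 ∨ k = 1 ∨ k = -1 := by omega
    rcases h with h | h | h | h
    · right; right; nlinarith
    · right; right; nlinarith
    · left; exact h
    · right; left; exact h
  rcases hk14 with h1 | h1 | h1
  · exact lemC1 hBsymm hpos hcart hrefl hS1 hS2 hμ hν ha (by rw [← h1]; exact hk)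
  · subst h1
    have hνμ : B ν μ = -(B μ μ) / 2 := by field_simp at hk ⊢; push_cast at hk; linarith
    have hμν : B μ ν = -(B μ μ) / 2 := (hBsymm μ ν).trans hνμ
    have hν'Δ : ν - ((-1 : ℤ) : ℚ) • μ ∈ Δ := by
      have h := hrefl μ hμ ν hν; rwa [← hk] at h
    set ν' := ν - ((-1 : ℤ) : ℚ) • μ with hν'def
    have hS' : S ν' = S ν := lemR hpos hcart hrefl hS1 hS2 hμ hν hk
    have hν'μ : B ν' μ = B μ μ / 2 := by
      simp only [hν'def, map_sub, map_smul, LinearMap.sub_apply, LinearMap.smul_apply,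
        smul_eq_mul, hνμ]
      push_cast; ring
    have hν'ν' : B μ μ = B ν' ν' := by
      simp only [hν'def, map_sub, map_smul, LinearMap.sub_apply, LinearMap.smul_apply,
        smul_eq_mul, hνμ, hμν]
      push_cast; rw [← ha]; ring
    have hk1 : ((1 : ℤ) : ℚ) = 2 * B ν' μ / B μ μ := by
      rw [hν'μ]; field_simp; norm_num
    exact (lemC1 hBsymm hpos hcart hrefl hS1 hS2 hμ hν'Δ hν'ν' hk1).trans hS'
  · by_cases hdep : ∃ c : ℚ, ν = c • μ
    · obtain ⟨c, hc⟩ := hdep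
      have hcc : B μ μ = c * c * B μ μ := by
        have hx : B ν ν = c * c * B μ μ := by
          rw [hc]; simp only [map_smul, LinearMap.smul_apply, smul_eq_mul]; ring
        exact ha.trans hx
      have hc1 : (c - 1) * (c + 1) = 0 := by
        have : (c * c - 1) * B μ μ = 0 := by linarith
        rcases mul_eq_zero.1 this with h | h
        · linarith
        · exact absurd h hA
      rcases mul_eq_zero.1 hc1 with h | h
      · have : c = 1 := by linarith
        rw [hc, this, one_smul]
      · have hcneg : c = -1 := by linarith
        have h2 : ((2 : ℤ) : ℚ) = 2 * B μ μ / B μ μ := by field_simp; norm_num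
        have h3 := lemR hpos hcart hrefl hS1 hS2 hμ hμ h2
        have hveq : μ - ((2 : ℤ) : ℚ) • μ = -μ := by push_cast; module
        rw [hveq] at h3
        rw [hc, hcneg]
        rw [show (-1 : ℚ) • μ = -μ by module]
        exact h3.symm
    · push_neg at hdep
      have hq : (k : ℚ) = 2 * B μ ν / B ν ν := by
        rw [hBsymm μ ν, ← ha]; exact hk
      exact (lemF hpos hrefl hlocfin hμ hν hk hq h1 hdep).elim

include hirr in
lemma lemConn {μ ν : V} (hμ : μ ∈ Δ) (hν : ν ∈ Δ) : ∃ n, Chn B Δ n μ ν := by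
  set Δ₁ : Set V := {ρ | ∃ n, Chn B Δ n μ ρ} with hΔ₁
  set Δ₂ : Set V := Δ \ Δ₁ with hΔ₂
  have hsub : Δ₁ ⊆ Δ := fun ρ hρ => (chn_mem hρ.choose_spec).2
  have hcover : Δ = Δ₁ ∪ Δ₂ := (Set.union_diff_cancel hsub).symm
  have horth : ∀ a ∈ Δ₁, ∀ b ∈ Δ₂, B a b = 0 := by
    rintro a ⟨n, ha⟩ b hb
    by_contra hab
    exact hb.2 ⟨n + 1, Chn.snoc b ha hb.1 hab⟩
  rcases hirr Δ₁ Δ₂ hcover horth with h | h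
  · have hm : μ ∈ Δ₁ := ⟨0, Chn.refl μ hμ⟩
    rw [h] at hm
    exact absurd hm (Set.notMem_empty μ)
  · have hν1 : ν ∈ Δ₁ := by
      rcases (hcover ▸ hν) with h1 | h1
      · exact h1
      · exact absurd (h ▸ h1) (Set.notMem_empty ν)
    exact hν1

include hBsymm hpos hcart hrefl hlocfin hS1 hS2 in
lemma lemV : ∀ n : ℕ, ∀ x y : V, Chn B Δ n x y → B x x = B y y → S x = S y := by
  intro n
  induction n using Nat.strong_induction_on with
  | _ n IH =>
  intro x y hchn hxy
  cases hchn with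
  | refl => rfl
  | @snoc n' x' ymid z h hzΔ he =>
    cases h with
    | refl w hw =>
      exact lemC hBsymm hpos hcart hrefl hlocfin hS1 hS2 hw hzΔ hxy (hBsymm x y ▸ he)
    | @snoc m x'' y₂ zmid h₂ hyΔ he₂ =>
      by_cases hbz : B y₂ y = 0
      · obtain ⟨j, hj⟩ := hcart ymid hyΔ y hzΔ
        have hj0 : j ≠ 0 := by
          intro h0
          rw [h0] at hj
          push_cast at hj
          have hyy' : B y ymid = 0 := by
            have hd := (hpos ymid hyΔ).ne'
            field_simp [hd] at hj
            linarith
          exact he ((hBsymm ymid y).trans hyy')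
        have hz'Δ : y - (j : ℚ) • ymid ∈ Δ := by
          have h := hrefl ymid hyΔ y hzΔ; rwa [← hj] at h
        have hSz' : S (y - (j : ℚ) • ymid) = S y :=
          lemR hpos hcart hrefl hS1 hS2 hyΔ hzΔ hj
        have hnorm : B (y - (j : ℚ) • ymid) (y - (j : ℚ) • ymid) = B y y :=
          normR hBsymm hpos hyΔ hj
        have hedge : B y₂ (y - (j : ℚ) • ymid) ≠ 0 := by
          simp only [map_sub, map_smul, LinearMap.sub_apply, LinearMap.smul_apply,
            smul_eq_mul, hbz, zero_sub, neg_ne_zero]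
          exact mul_ne_zero (by exact_mod_cast hj0) he₂
        have hchain : Chn B Δ (m + 1) x (y - (j : ℚ) • ymid) :=
          Chn.snoc _ h₂ hz'Δ hedge
        have := IH (m + 1) (by omega) x _ hchain (hxy.trans hnorm.symm)
        exact this.trans hSz'
      · have hchain : Chn B Δ (m + 1) x y := Chn.snoc _ h₂ hzΔ hbz
        exact IH (m + 1) (by omega) x y hchain hxy

include hBsymm hpos hcart hrefl in
lemma lemSA {μ0 : V} (hμ0 : μ0 ∈ Δ) :
    ∀ {n : ℕ} {x y : V}, Chn B Δ n x y → B x x = B μ0 μ0 →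
      B y y = B μ0 μ0 ∨ ∃ α ∈ Δ, B α α = B μ0 μ0 ∧ B α y ≠ 0 := by
  intro n x y h
  induction h with
  | refl x hx => intro hx0; exact Or.inl hx0
  | @snoc n x y z h hzΔ he ih =>
    intro hx0
    rcases ih hx0 with hyshort | ⟨α, hαΔ, hαshort, hαy⟩
    · exact Or.inr ⟨y, (chn_mem h).2, hyshort, he⟩
    · by_cases hαz : B α z = 0
      · have hyΔ : y ∈ Δ := (chn_mem h).2
        obtain ⟨j, hj⟩ := hcart y hyΔ α hαΔ
        have hj0 : j ≠ 0 := by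
          intro h0; rw [h0] at hj; push_cast at hj
          have : B α y = 0 := by
            have hd := (hpos y hyΔ).ne'
            field_simp [hd] at hj
            linarith
          exact hαy this
        have hα'Δ : α - (j : ℚ) • y ∈ Δ := by
          have h' := hrefl y hyΔ α hαΔ; rwa [← hj] at h'
        have hα'short : B (α - (j : ℚ) • y) (α - (j : ℚ) • y) = B μ0 μ0 :=
          (normR hBsymm hpos hyΔ hj).trans hαshort
        have hα'z : B (α - (j : ℚ) • y) z ≠ 0 := by
          simp only [map_sub, map_smul, LinearMap.sub_apply, LinearMap.smul_apply,
            smul_eq_mul, hαz, zero_sub, neg_ne_zero]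
          exact mul_ne_zero (by exact_mod_cast hj0) he
        exact Or.inr ⟨α - (j : ℚ) • y, hα'Δ, hα'short, hα'z⟩
      · exact Or.inr ⟨α, hαΔ, hαshort, hαz⟩

end
end St12Aux

open St12Aux in
/-- For a root system `{S_μ}_{μ∈Δ}` extended by an abelian group `G`, over a locally finite
irreducible root system `Δ`: roots of the same length have the same set `S_μ`, and if `μ` is
a short root then `S_ν ⊆ S_μ` for all `ν ∈ Δ`. -/
theorem stmt_12 (V : Type*) [AddCommGroup V] [Module ℚ V]
    (B : V →ₗ[ℚ] V →ₗ[ℚ] ℚ) (hBsymm : ∀ u v : V, B u v = B v u)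
    (Δ : Set V) (h0 : (0 : V) ∉ Δ) (hΔne : Δ.Nonempty)
    (hpos : ∀ μ ∈ Δ, 0 < B μ μ)
    (hcart : ∀ μ ∈ Δ, ∀ ν ∈ Δ, ∃ k : ℤ, (k : ℚ) = 2 * B ν μ / B μ μ)
    (hrefl : ∀ μ ∈ Δ, ∀ ν ∈ Δ, ν - (2 * B ν μ / B μ μ) • μ ∈ Δ)
    (hlocfin : ∀ S' : Finset V, (Δ ∩ (Submodule.span ℚ (S' : Set V) : Set V)).Finite)
    (hirr : ∀ Δ₁ Δ₂ : Set V, Δ = Δ₁ ∪ Δ₂ →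
      (∀ a ∈ Δ₁, ∀ b ∈ Δ₂, B a b = 0) → Δ₁ = ∅ ∨ Δ₂ = ∅)
    (G : Type*) [AddCommGroup G] (S : V → Set G)
    (hgen : AddSubgroup.closure (⋃ μ ∈ Δ, S μ) = ⊤)
    (hS1 : ∀ μ ∈ Δ, ∀ ν ∈ Δ, ∀ k : ℤ, (k : ℚ) = 2 * B ν μ / B μ μ →
      ∀ s ∈ S ν, ∀ s' ∈ S μ, s - k • s' ∈ S (ν - (k : ℚ) • μ))
    (hS2 : ∀ μ ∈ Δ, (1 / 2 : ℚ) • μ ∉ Δ → (0 : G) ∈ S μ) :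
    (∀ μ ∈ Δ, ∀ ν ∈ Δ, B μ μ = B ν ν → S μ = S ν) ∧
    (∀ μ ∈ Δ, (∀ ρ ∈ Δ, B μ μ ≤ B ρ ρ) → ∀ ν ∈ Δ, S ν ⊆ S μ) := by
  have part1 : ∀ μ ∈ Δ, ∀ ν ∈ Δ, B μ μ = B ν ν → S μ = S ν := by
    intro μ hμ ν hν hlen
    obtain ⟨n, hchn⟩ := lemConn hirr hμ hν
    exact lemV hBsymm hpos hcart hrefl hlocfin hS1 hS2 n μ ν hchn hlen
  refine ⟨part1, ?_⟩
  intro μ hμ hshort ν hν s hs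
  by_cases hlen : B μ μ = B ν ν
  · rw [part1 μ hμ ν hν hlen]; exact hs
  · obtain ⟨n, hchn⟩ := lemConn hirr hμ hν
    rcases lemSA hBsymm hpos hcart hrefl hμ hchn rfl with h | ⟨α, hαΔ, hαlen, hαν⟩
    · exact absurd h.symm hlen
    · have hA := (hpos α hαΔ).ne'
      have hN := (hpos ν hν).ne'
      have hμ0 := hpos μ hμ
      obtain ⟨q, hq⟩ := hcart ν hν α hαΔ
      obtain ⟨p, hp⟩ := hcart α hαΔ ν hν
      have hq0 : q ≠ 0 := by
        intro h0; rw [h0] at hq; push_cast at hq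
        have : B α ν = 0 := by field_simp [hN] at hq; linarith
        exact hαν this
      have hle : B α α ≤ B ν ν := by rw [hαlen]; exact hshort ν hν
      have hltne : B α α ≠ B ν ν := by rw [hαlen]; exact hlen
      have hlt : B α α < B ν ν := lt_of_le_of_ne hle hltne
      -- q = ±1
      have hq1 : q = 1 ∨ q = -1 := by
        by_contra hno
        push_neg at hno
        have hq4 : 4 ≤ q * q := by
          have h : 2 ≤ q ∨ q ≤ -2 := by omega
          rcases h with h | h <;> nlinarith
        by_cases hdep : ∃ c : ℚ, ν = c • α
        · obtain ⟨c, hc⟩ := hdep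
          have hc0 : c ≠ 0 := by
            intro h0
            have : B ν ν = 0 := by rw [hc, h0]; simp
            exact hN this
          have hBαν : B α ν = c * B α α := by
            rw [hc]; simp only [map_smul, smul_eq_mul]
          have hBνν : B ν ν = c * c * B α α := by
            rw [hc]; simp only [map_smul, LinearMap.smul_apply, smul_eq_mul]; ring
          have hqc : (q : ℚ) * c = 2 := by
            rw [hBαν, hBνν] at hq
            field_simp [hA, hc0] at hq
            have h2 : ((q : ℚ) * c) * (c * B α α) = 2 * (c * B α α) := by
              linear_combination (c * B α α) * hq
            exact mul_right_cancel₀ (mul_ne_zero hc0 hA) h2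
          have hc2 : 1 < c * c := by
            rw [hBνν] at hlt; nlinarith [hpos α hαΔ]
          have hlt4 : ((q * q : ℤ) : ℚ) < 4 := by push_cast; nlinarith
          have hge4 : (4 : ℚ) ≤ ((q * q : ℤ) : ℚ) := by exact_mod_cast hq4
          linarith
        · push_neg at hdep
          have hkey : (p : ℚ) * B α α = (q : ℚ) * B ν ν := by
            have hp' : (p : ℚ) * B α α = 2 * B ν α := by
              field_simp [hA] at hp; linarith
            have hq' : (q : ℚ) * B ν ν = 2 * B α ν := by
              field_simp [hN] at hq; linarith
            rw [hp', hq', hBsymm α ν]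
          have hqq : (4 : ℚ) ≤ (q : ℚ) * (q : ℚ) := by exact_mod_cast hq4
          have hqqpos : (0 : ℚ) < (q : ℚ) * (q : ℚ) := by nlinarith
          have hkey2 : (p : ℚ) * (q : ℚ) * B α α = (q : ℚ) * (q : ℚ) * B ν ν := by
            linear_combination (q : ℚ) * hkey
          have hppq : (q : ℚ) * (q : ℚ) < (p : ℚ) * (q : ℚ) := by
            nlinarith [hpos α hαΔ, mul_pos hqqpos (sub_pos.2 hlt), hkey2]
          have hpq4 : 4 ≤ p * q := by
            have : (4 : ℚ) < (p : ℚ) * (q : ℚ) := lt_of_le_of_lt hqq hppq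
            have h' : (4 : ℤ) < p * q := by exact_mod_cast this
            omega
          exact (lemF hpos hrefl hlocfin hαΔ hν hp hq hpq4 hdep).elim
      -- a helper finishing the proof given a short root with Cartan integer -1 against ν
      have final : ∀ α', α' ∈ Δ → B α' α' = B μ μ →
          ((-1 : ℤ) : ℚ) = 2 * B α' ν / B ν ν → s ∈ S μ := by
        intro α' hα' hlen' hk'
        have h0' : (0 : G) ∈ S α' := by
          apply hS2 α' hα'
          intro hhalf
          have hineq := hshort _ hhalf
          have hh : B ((1 / 2 : ℚ) • α') ((1 / 2 : ℚ) • α') = B α' α' / 4 := by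
            simp only [map_smul, LinearMap.smul_apply, smul_eq_mul]; ring
          rw [hh, hlen'] at hineq
          linarith
        have hmem := hS1 ν hν α' hα' (-1) hk' 0 h0' s hs
        have hss : (0 : G) - (-1 : ℤ) • s = s := by simp
        rw [hss] at hmem
        have hγΔ : α' - ((-1 : ℤ) : ℚ) • ν ∈ Δ := by
          have h := hrefl ν hν α' hα'; rwa [← hk'] at h
        have hαν' : B α' ν = -(B ν ν) / 2 := by
          push_cast at hk'
          field_simp [hN] at hk'
          linarith
        have hνα' : B ν α' = -(B ν ν) / 2 := (hBsymm ν α').trans hαν'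
        have hγlen : B μ μ = B (α' - ((-1 : ℤ) : ℚ) • ν) (α' - ((-1 : ℤ) : ℚ) • ν) := by
          simp only [map_sub, map_smul, LinearMap.sub_apply, LinearMap.smul_apply,
            smul_eq_mul, hαν', hνα']
          push_cast; rw [← hlen']; ring
        rw [part1 μ hμ _ hγΔ hγlen]
        exact hmem
      rcases hq1 with h1 | h1
      · -- q = 1 : use -α
        have hnegΔ : -α ∈ Δ := by
          have h := hrefl α hαΔ α hαΔ
          rw [show (2 * B α α / B α α : ℚ) = 2 by field_simp] at h
          rwa [show α - (2 : ℚ) • α = -α by module] at h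
        apply final (-α) hnegΔ
        · simp only [map_neg, LinearMap.neg_apply, neg_neg]; exact hαlen
        · have hBn : B (-α) ν = - B α ν := by simp
          rw [hBn]
          rw [h1] at hq
          push_cast at hq ⊢
          field_simp [hN] at hq ⊢
          linarith
      · rw [h1] at hq
        exact final α hαΔ hαlen hq
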